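/- Let (V,h) be a real quadratic space of odd dimension and γ: Cl(V,h) → End_ℂ(S) an irreducible complex Clifford representation. Then the ℂ-linear extension γ_ℂ: ℂl(V,h) → End_ℂ(S) of γ restricts to an isomorphism of unital associative ℂ-algebras from the even subalgebra ℂl⁺(V,h) onto End_ℂ(S); in particular this restriction is injective and surjective. -/

import Mathlib

open scoped TensorProduct

noncomputable section

namespace CpxClifford

variable {V : Type*} [AddCommGroup V] [Module ℝ V]

/-- The complexified Clifford algebra `ℂl(V,h) = Cl(V,h) ⊗_ℝ ℂ` of a quadratic form. -/
abbrev CCl (Q : QuadraticForm ℝ V) : Type _ := ℂ ⊗[ℝ] CliffordAlgebra Q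

variable (Q : QuadraticForm ℝ V)

/-- The canonical embedding of `V` into the complexified Clifford algebra. -/
def ιC : V →ₗ[ℝ] CCl Q :=
  (Algebra.TensorProduct.includeRight :
      CliffordAlgebra Q →ₐ[ℝ] CCl Q).toLinearMap ∘ₗ CliffordAlgebra.ι Q

/-- The ℂ-linear extension `π_ℂ` of the parity (grade) involution. -/
def πC : CCl Q →ₐ[ℝ] CCl Q :=
  Algebra.TensorProduct.map (AlgHom.id ℝ ℂ) (CliffordAlgebra.involute)

/-- The ℂ-antilinear extension `τ_ℂ` of the reversion anti-automorphism:
`τ_ℂ(z ⊗ x) = conj z ⊗ τ(x)`. -/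
def τC : CCl Q →ₗ[ℝ] CCl Q :=
  TensorProduct.map (Complex.conjAe : ℂ ≃ₐ[ℝ] ℂ).toLinearMap CliffordAlgebra.reverse

/-- The twisted reversion `τ̃_ℂ = τ_ℂ ∘ π_ℂ`. -/
def τtC : CCl Q →ₗ[ℝ] CCl Q := τC Q ∘ₗ (πC Q).toLinearMap

/-- The twisted norm `N(x) = τ̃_ℂ(x) · x`. -/
def Nor (x : CCl Q) : CCl Q := τtC Q x * x

/-- The twisted adjoint action `Ad~(x)(y) = π_ℂ(x) · y · x⁻¹` of a unit `x`. -/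
def Adt (x : (CCl Q)ˣ) (y : CCl Q) : CCl Q := πC Q ↑x * y * ↑x⁻¹

/-- Membership in the complex Clifford group `Γ(V,h)`:
the twisted adjoint action preserves (the image of) `V`. -/
def memΓ (x : (CCl Q)ˣ) : Prop :=
  Adt Q x '' Set.range (ιC Q) = Set.range (ιC Q)

/-- Membership in the complex special Clifford group `Γˢ(V,h) = Γ(V,h) ∩ ℂl⁺(V,h)`:
the even elements of the complex Clifford group (even = fixed by the parity involution). -/
def memΓs (x : (CCl Q)ˣ) : Prop :=
  memΓ Q x ∧ πC Q ↑x = (↑x : CCl Q)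

open Classical in
/-- The complex scalar `c` such that `x = c·1`, when it exists (`0` otherwise). -/
def scalarOf (x : CCl Q) : ℂ :=
  if h : ∃ c : ℂ, x = algebraMap ℂ (CCl Q) c then h.choose else 0

/-- `|N(x)|`: the absolute value of the complex scalar `N(x)`. -/
def absN (x : CCl Q) : ℝ := ‖scalarOf Q (Nor Q x)‖

/-- Membership in `Pin^c(V,h) = {x ∈ Γ(V,h) : |N(x)| = 1}`. -/
def memPinc (x : (CCl Q)ˣ) : Prop := memΓ Q x ∧ absN Q ↑x = 1

/-- Membership in `Spin^c(V,h) = {x ∈ Γˢ(V,h) : |N(x)| = 1}`. -/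
def memSpinc (x : (CCl Q)ˣ) : Prop := memΓs Q x ∧ absN Q ↑x = 1

/-- The normalization map `r(x) = |N(x)|^{-1/2} · x`. -/
def rmap (x : CCl Q) : CCl Q := (Real.sqrt (absN Q x))⁻¹ • x

end CpxClifford

namespace CpxClifford

variable {V : Type*} [AddCommGroup V] [Module ℝ V]
variable {S : Type*} [AddCommGroup S] [Module ℝ S] [Module ℂ S] [IsScalarTower ℝ ℂ S]
variable (Q : QuadraticForm ℝ V)

/-- The image `γ(ι(V))` of `V` in `End_ℂ(S)` under a complex Clifford representation. -/
def gammaV (γ : CliffordAlgebra Q →ₐ[ℝ] Module.End ℂ S) : Set (Module.End ℂ S) :=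
  Set.range fun v : V => γ (CliffordAlgebra.ι Q v)

/-- A complex Clifford representation is weakly faithful if `v ↦ γ(ι(v))` is injective. -/
def WeaklyFaithful (γ : CliffordAlgebra Q →ₐ[ℝ] Module.End ℂ S) : Prop :=
  Function.Injective fun v : V => γ (CliffordAlgebra.ι Q v)

/-- Conjugation `A ↦ φ ∘ A ∘ φ⁻¹` by a ℂ-linear automorphism of `S`. -/
def conjMap (φ : S ≃ₗ[ℂ] S) (A : Module.End ℂ S) : Module.End ℂ S :=
  φ.toLinearMap ∘ₗ A ∘ₗ φ.symm.toLinearMap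

/-- Membership in the complex Lipschitz group `L_γ`. -/
def memLip (γ : CliffordAlgebra Q →ₐ[ℝ] Module.End ℂ S) (φ : S ≃ₗ[ℂ] S) : Prop :=
  conjMap φ '' gammaV Q γ = gammaV Q γ

/-- A complex Clifford representation is irreducible if the only invariant complex
subspaces of `S` are `0` and `S`. -/
def IsIrred (γ : CliffordAlgebra Q →ₐ[ℝ] Module.End ℂ S) : Prop :=
  ∀ W : Submodule ℂ S, (∀ (x : CliffordAlgebra Q), ∀ w ∈ W, γ x w ∈ W) → W = ⊥ ∨ W = ⊤

/-- The ℂ-linear extension `γ_ℂ : ℂl(V,h) → End_ℂ(S)` of a complex Clifford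
representation `γ : Cl(V,h) → End_ℂ(S)`. -/
def γC (γ : CliffordAlgebra Q →ₐ[ℝ] Module.End ℂ S) : CCl Q →ₐ[ℂ] Module.End ℂ S :=
  Algebra.TensorProduct.lift (Algebra.ofId ℂ (Module.End ℂ S)) γ
    (fun c x => by simpa [Algebra.ofId] using Algebra.commute_algebraMap_left c (γ x))

/-- The even part `ℂl⁺(V,h)`: the fixed-point set of the parity involution `π_ℂ`. -/
def evenSet : Set (CCl Q) := {x : CCl Q | πC Q x = x}

end CpxClifford




set_option maxHeartbeats 1000000 in
set_option synthInstance.maxHeartbeats 400000 in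
open Module LinearMap in
theorem my_burnside {S : Type*} [AddCommGroup S] [Module ℂ S] [FiniteDimensional ℂ S]
    [Nontrivial S] (B : Subalgebra ℂ (Module.End ℂ S))
    (hirr : ∀ W : Submodule ℂ S, (∀ b ∈ B, ∀ w ∈ W, (b : Module.End ℂ S) w ∈ W) → W = ⊥ ∨ W = ⊤) :
    ∀ T : Module.End ℂ S, ∃ b : B, (b : Module.End ℂ S) = T := by
  have hsm : ∀ (b : B) (s : S), b • s = (b : Module.End ℂ S) s := fun _ _ => rfl
  have halg : ∀ (c : ℂ) (s : S),
      (⟨algebraMap ℂ (Module.End ℂ S) c, B.algebraMap_mem c⟩ : B) • s = c • s := by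
    intro c s; rfl
  -- simplicity
  haveI : Nontrivial (Submodule B S) := by
    obtain ⟨x, hx⟩ := exists_ne (0 : S)
    refine ⟨⊥, ⊤, fun hbt => hx ?_⟩
    have : x ∈ (⊤ : Submodule B S) := trivial
    rw [← hbt] at this
    simpa using this
  haveI hsimple : IsSimpleModule B S := by
    refine { toIsSimpleOrder := { toNontrivial := inferInstance, eq_bot_or_eq_top := ?_ } }
    intro W
    let W' : Submodule ℂ S :=
      { carrier := W
        add_mem' := fun ha hb => W.add_mem ha hb
        zero_mem' := W.zero_mem
        smul_mem' := fun c x hx => by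
          have := W.smul_mem (⟨algebraMap ℂ (Module.End ℂ S) c, B.algebraMap_mem c⟩ : B) hx
          rwa [halg] at this }
    have hWmem : ∀ x, x ∈ W' ↔ x ∈ W := fun x => Iff.rfl
    rcases hirr W' (fun b hb w hw => by
        have := W.smul_mem (⟨b, hb⟩ : B) hw
        rwa [hsm] at this) with h | h
    · left
      rw [Submodule.eq_bot_iff]
      intro x hx
      have : x ∈ W' := hx
      rw [h] at this
      simpa using this
    · right
      rw [Submodule.eq_top_iff']
      intro x
      have : x ∈ W' := h ▸ trivial
      exact this
  have schur : ∀ q : S →ₗ[B] S, ∃ c : ℂ, ∀ s, q s = c • s := by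
    intro q
    have hqc : ∀ (c : ℂ) (s : S), q (c • s) = c • q s := by
      intro c s
      rw [← halg c s, q.map_smul, halg]
    let qc : Module.End ℂ S :=
      { toFun := q, map_add' := q.map_add, map_smul' := hqc }
    obtain ⟨c, hc⟩ := Module.End.exists_eigenvalue qc
    obtain ⟨v, hv⟩ := hc.exists_hasEigenvector
    let W : Submodule B S :=
      { carrier := {s | q s = c • s}
        add_mem' := fun {a b} ha hb => by
          simp only [Set.mem_setOf_eq] at *
          rw [q.map_add, ha, hb, smul_add]
        zero_mem' := by simp
        smul_mem' := fun b s hs => by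
          simp only [Set.mem_setOf_eq] at *
          rw [q.map_smul, hs, hsm, hsm, map_smul] }
    have hvW : v ∈ W := hv.apply_eq_smul
    have : W ≠ ⊥ := by
      intro hW
      rw [hW] at hvW
      exact hv.2 (by simpa using hvW)
    rcases hsimple.eq_bot_or_eq_top W with h | h
    · exact absurd h this
    · exact ⟨c, fun s => by have : s ∈ W := h ▸ trivial; exact this⟩
  -- density
  intro T
  set k := finrank ℂ S with hk
  let β : Basis (Fin k) ℂ S := finBasis ℂ S
  have hssS : IsSemisimpleModule B S := by
    refine IsSemisimpleModule.of_sSup_simples_eq_top ?_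
    refine eq_top_iff.2 (le_sSup ?_)
    exact IsSimpleModule.congr Submodule.topEquiv
  haveI hssP : IsSemisimpleModule B (Fin k → S) := by
    classical
    exact isSemisimpleModule_of_isSemisimpleModule_submodule'
      (p := (range <| single B (fun _ : Fin k => S) ·))
      (fun i => hssS.range _)
      (by simp_rw [range_eq_map, Submodule.iSup_map_single, Submodule.pi_top])
  let v : Fin k → S := fun i => β i
  let N : Submodule B (Fin k → S) := Submodule.span B {v}
  obtain ⟨W, hWc⟩ := exists_isCompl N
  let pr : (Fin k → S) →ₗ[B] (Fin k → S) := N.subtype ∘ₗ (N.projectionOnto W hWc)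
  have hprN : ∀ y (hy : y ∈ N), pr y = y := fun y hy => by
    simp only [pr, LinearMap.comp_apply, Submodule.projectionOnto_apply_left hWc ⟨y, hy⟩,
      Submodule.subtype_apply]
  have hprmem : ∀ y, pr y ∈ N := fun y => (N.projectionOnto W hWc y).2
  classical
  let q : Fin k → Fin k → (S →ₗ[B] S) := fun i j =>
    (LinearMap.proj i) ∘ₗ pr ∘ₗ (LinearMap.single B (fun _ => S) j)
  choose cf hcf using fun i j => schur (q i j)
  have hpr : ∀ (x : Fin k → S) (i), pr x i = ∑ j, cf i j • x j := by
    intro x i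
    have hx : (∑ j, Pi.single j (x j)) = x := Finset.univ_sum_single x
    conv_lhs => rw [← hx]
    rw [map_sum]
    rw [Finset.sum_apply]
    refine Finset.sum_congr rfl fun j _ => ?_
    have : pr (Pi.single j (x j)) i = q i j (x j) := rfl
    rw [this, hcf i j (x j)]
  have hvN : v ∈ N := Submodule.mem_span_singleton_self v
  have hprv : pr v = v := hprN v hvN
  let w : Fin k → S := fun i => T (v i)
  have hw : pr w = w := by
    funext i
    rw [hpr]
    have : ∀ j, cf i j • w j = T (cf i j • v j) := fun j => (map_smul T _ _).symm
    calc ∑ j, cf i j • w j = ∑ j, T (cf i j • v j) := Finset.sum_congr rfl fun j _ => this j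
      _ = T (∑ j, cf i j • v j) := (map_sum T _ _).symm
      _ = T (pr v i) := by rw [hpr]
      _ = T (v i) := by rw [hprv]
  have hwN : w ∈ N := hw ▸ hprmem w
  obtain ⟨b, hb⟩ := Submodule.mem_span_singleton.mp hwN
  refine ⟨b, ?_⟩
  apply β.ext
  intro i
  have h1 : (b • v) i = w i := by rw [hb]
  rw [Pi.smul_apply, hsm] at h1
  exact h1



set_option linter.unusedSectionVars false

noncomputable section
namespace CliffAux

variable {n : ℕ} {A : Type*} [Ring A] [Algebra ℂ A]

def sg (a b : Fin n) : ℂ := if b = a then 1 else -1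

variable (E : Fin n → A)

def eL (l : List (Fin n)) : A := (l.map E).prod

def eP (s : Finset (Fin n)) : A := eL E (s.sort (· ≤ ·))

def lsupp (l : List (Fin n)) : Finset (Fin n) := l.foldr (fun a u => symmDiff {a} u) ∅

@[simp] theorem eL_nil : eL E [] = 1 := rfl

@[simp] theorem eL_cons (a : Fin n) (l : List (Fin n)) :
    eL E (a :: l) = E a * eL E l := by simp [eL]

theorem eL_append (l m : List (Fin n)) : eL E (l ++ m) = eL E l * eL E m := by
  simp [eL]

@[simp] theorem eP_empty : eP E ∅ = 1 := by simp [eP, Finset.sort_empty]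

theorem sg_cases (a b : Fin n) : sg a b = 1 ∨ sg a b = -1 := by
  unfold sg; split <;> simp

theorem sg_sq (a b : Fin n) : sg a b * sg a b = 1 := by
  rcases sg_cases a b with h | h <;> rw [h] <;> ring

theorem symmDiff_singleton_of_mem {a : Fin n} {s : Finset (Fin n)} (ha : a ∈ s) :
    symmDiff ({a} : Finset (Fin n)) s = s.erase a := by
  ext x
  simp only [Finset.mem_symmDiff, Finset.mem_singleton, Finset.mem_erase]
  constructor
  · rintro (⟨rfl, h⟩ | ⟨h1, h2⟩)
    · exact absurd ha h
    · exact ⟨h2, h1⟩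
  · rintro ⟨h1, h2⟩
    exact Or.inr ⟨h2, h1⟩

theorem symmDiff_singleton_of_not_mem {a : Fin n} {s : Finset (Fin n)} (ha : a ∉ s) :
    symmDiff ({a} : Finset (Fin n)) s = insert a s := by
  ext x
  simp only [Finset.mem_symmDiff, Finset.mem_singleton, Finset.mem_insert]
  constructor
  · rintro (⟨rfl, _⟩ | ⟨h1, h2⟩)
    · exact Or.inl rfl
    · exact Or.inr h1
  · rintro (rfl | hx)
    · exact Or.inl ⟨rfl, ha⟩
    · exact Or.inr ⟨hx, fun h => ha (h ▸ hx)⟩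

variable (hE1 : ∀ i, E i * E i = 1)
variable (hanti : ∀ i j, i ≠ j → E i * E j = -(E j * E i))

section
include hE1 hanti

theorem E_comm (a b : Fin n) : E a * E b = sg a b • (E b * E a) := by
  by_cases h : b = a
  · subst h; simp [sg]
  · rw [hanti a b (fun hc => h hc.symm)]
    simp [sg, h]

theorem comm_single (a : Fin n) (l : List (Fin n)) :
    E a * eL E l = ((l.map (sg a)).prod) • (eL E l * E a) := by
  induction l with
  | nil => simp
  | cons b l ih =>
    calc E a * eL E (b :: l) = (E a * E b) * eL E l := by rw [eL_cons, mul_assoc]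
      _ = (sg a b • (E b * E a)) * eL E l := by rw [E_comm E hE1 hanti]
      _ = sg a b • (E b * (E a * eL E l)) := by rw [smul_mul_assoc, mul_assoc]
      _ = sg a b • (E b * ((l.map (sg a)).prod • (eL E l * E a))) := by rw [ih]
      _ = (sg a b * (l.map (sg a)).prod) • (E b * (eL E l * E a)) := by
          rw [mul_smul_comm, smul_smul]
      _ = (((b :: l).map (sg a)).prod) • (eL E (b :: l) * E a) := by
          rw [List.map_cons, List.prod_cons, eL_cons, mul_assoc]

theorem comm_lists (m l : List (Fin n)) :
    eL E m * eL E l = ((m.map (fun a => (l.map (sg a)).prod)).prod) • (eL E l * eL E m) := by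
  induction m with
  | nil => simp
  | cons a m ih =>
    calc eL E (a :: m) * eL E l = E a * (eL E m * eL E l) := by rw [eL_cons, mul_assoc]
      _ = E a * ((m.map (fun a => (l.map (sg a)).prod)).prod • (eL E l * eL E m)) := by rw [ih]
      _ = (m.map (fun a => (l.map (sg a)).prod)).prod • ((E a * eL E l) * eL E m) := by
          rw [mul_smul_comm, mul_assoc]
      _ = (m.map (fun a => (l.map (sg a)).prod)).prod •
            (((l.map (sg a)).prod • (eL E l * E a)) * eL E m) := by
          rw [comm_single E hE1 hanti]
      _ = ((l.map (sg a)).prod * (m.map (fun a => (l.map (sg a)).prod)).prod) •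
            (eL E l * (E a * eL E m)) := by
          rw [smul_mul_assoc, smul_smul, mul_comm ((l.map (sg a)).prod), mul_assoc]
      _ = (((a :: m).map (fun a => (l.map (sg a)).prod)).prod) • (eL E l * eL E (a :: m)) := by
          rw [List.map_cons, List.prod_cons, eL_cons]

theorem perm_sign {l l' : List (Fin n)} (h : l.Perm l') :
    ∃ σ : ℂ, (σ = 1 ∨ σ = -1) ∧ eL E l = σ • eL E l' := by
  induction h with
  | nil => exact ⟨1, Or.inl rfl, by simp⟩
  | cons a _ ih =>
    obtain ⟨σ, hσ, he⟩ := ih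
    exact ⟨σ, hσ, by rw [eL_cons, eL_cons, he, mul_smul_comm]⟩
  | swap a b l =>
    refine ⟨sg b a, sg_cases b a, ?_⟩
    rw [eL_cons, eL_cons, eL_cons, eL_cons, ← mul_assoc, ← mul_assoc,
      E_comm E hE1 hanti b a, smul_mul_assoc]
  | trans h1 h2 ih1 ih2 =>
    obtain ⟨σ, hσ, he⟩ := ih1
    obtain ⟨σ', hσ', he'⟩ := ih2
    refine ⟨σ * σ', ?_, by rw [he, he', smul_smul]⟩
    rcases hσ with h | h <;> rcases hσ' with h' | h' <;> rw [h, h'] <;> simp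

theorem eL_eq_eP {l : List (Fin n)} (hnd : l.Nodup) :
    ∃ σ : ℂ, (σ = 1 ∨ σ = -1) ∧ eL E l = σ • eP E l.toFinset := by
  refine perm_sign E hE1 hanti ?_
  refine List.perm_of_nodup_nodup_toFinset_eq hnd (Finset.sort_nodup _ _) ?_
  rw [Finset.sort_toFinset]

theorem E_mul_eP (a : Fin n) (s : Finset (Fin n)) :
    ∃ τ : ℂ, (τ = 1 ∨ τ = -1) ∧
      E a * eP E s = τ • eP E (symmDiff {a} s) := by
  have key : ∀ t : Finset (Fin n), a ∉ t → ∃ τ : ℂ, (τ = 1 ∨ τ = -1) ∧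
      E a * eP E t = τ • eP E (insert a t) := by
    intro t hat
    have hnd : (a :: t.sort (· ≤ ·)).Nodup := by
      refine List.nodup_cons.mpr ⟨?_, Finset.sort_nodup _ _⟩
      rw [Finset.mem_sort]; exact hat
    obtain ⟨τ, hτ, he⟩ := eL_eq_eP E hE1 hanti hnd
    refine ⟨τ, hτ, ?_⟩
    have h1 : eL E (a :: t.sort (· ≤ ·)) = E a * eP E t := by rw [eL_cons]; rfl
    have h2 : (a :: t.sort (· ≤ ·)).toFinset = insert a t := by
      rw [List.toFinset_cons, Finset.sort_toFinset]
    rw [← h1, he, h2]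
  by_cases ha : a ∈ s
  · obtain ⟨τ, hτ, he⟩ := key (s.erase a) (Finset.notMem_erase a s)
    rw [Finset.insert_erase ha] at he
    refine ⟨τ, hτ, ?_⟩
    rw [symmDiff_singleton_of_mem ha]
    have h2 := congrArg (fun y => E a * y) he
    simp only [mul_smul_comm] at h2
    rw [← mul_assoc, hE1, one_mul] at h2
    rw [h2, smul_smul]
    have hττ : τ * τ = 1 := by rcases hτ with h | h <;> rw [h] <;> ring
    rw [hττ, one_smul]
  · obtain ⟨τ, hτ, he⟩ := key s ha
    rw [symmDiff_singleton_of_not_mem ha]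
    exact ⟨τ, hτ, he⟩

theorem list_reduce (l : List (Fin n)) :
    ∃ σ : ℂ, (σ = 1 ∨ σ = -1) ∧ eL E l = σ • eP E (lsupp l) := by
  induction l with
  | nil => exact ⟨1, Or.inl rfl, by simp [lsupp]⟩
  | cons a l ih =>
    obtain ⟨σ, hσ, he⟩ := ih
    obtain ⟨τ, hτ, hs⟩ := E_mul_eP E hE1 hanti a (lsupp l)
    refine ⟨σ * τ, ?_, ?_⟩
    · rcases hσ with h | h <;> rcases hτ with h' | h' <;> rw [h, h'] <;> simp
    · show eL E (a :: l) = (σ * τ) • eP E (lsupp (a :: l))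
      have hl : lsupp (a :: l) = symmDiff {a} (lsupp l) := rfl
      rw [eL_cons, he, mul_smul_comm, hs, smul_smul, hl]

end

theorem lsupp_append (l m : List (Fin n)) :
    lsupp (l ++ m) = symmDiff (lsupp l) (lsupp m) := by
  induction l with
  | nil =>
    show lsupp m = symmDiff ∅ (lsupp m)
    rw [← Finset.bot_eq_empty, bot_symmDiff]
  | cons a l ih =>
    show symmDiff {a} (lsupp (l ++ m)) = symmDiff (symmDiff {a} (lsupp l)) (lsupp m)
    rw [ih, symmDiff_assoc]

theorem lsupp_nodup_eq {l : List (Fin n)} (h : l.Nodup) : lsupp l = l.toFinset := by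
  induction l with
  | nil => simp [lsupp]
  | cons a l ih =>
    obtain ⟨ha, hl⟩ := List.nodup_cons.mp h
    show symmDiff {a} (lsupp l) = (a :: l).toFinset
    rw [ih hl, List.toFinset_cons,
      symmDiff_singleton_of_not_mem (fun hc => ha (List.mem_toFinset.mp hc))]

section
include hE1 hanti

theorem eP_mul_eP (s t : Finset (Fin n)) :
    ∃ σ : ℂ, (σ = 1 ∨ σ = -1) ∧ eP E s * eP E t = σ • eP E (symmDiff s t) := by
  have h1 : eP E s * eP E t = eL E (s.sort (· ≤ ·) ++ t.sort (· ≤ ·)) := by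
    rw [eL_append]; rfl
  obtain ⟨σ, hσ, he⟩ := list_reduce E hE1 hanti (s.sort (· ≤ ·) ++ t.sort (· ≤ ·))
  refine ⟨σ, hσ, ?_⟩
  rw [h1, he, lsupp_append, lsupp_nodup_eq (Finset.sort_nodup _ _),
    lsupp_nodup_eq (Finset.sort_nodup _ _), Finset.sort_toFinset, Finset.sort_toFinset]

end

end CliffAux

namespace CliffAux

variable {n : ℕ} {A : Type*} [Ring A] [Algebra ℂ A] (E : Fin n → A)
variable (hE1 : ∀ i, E i * E i = 1)
variable (hanti : ∀ i j, i ≠ j → E i * E j = -(E j * E i))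

theorem prod_sg_list (a : Fin n) {l : List (Fin n)} (h : l.Nodup) :
    (l.map (sg a)).prod = (-1:ℂ)^l.length * (if a ∈ l then -1 else 1) := by
  induction l with
  | nil => simp
  | cons b l ih =>
    obtain ⟨hb, hl⟩ := List.nodup_cons.mp h
    rw [List.map_cons, List.prod_cons, ih hl]
    by_cases hba : b = a
    · subst hba
      have hs1 : sg b b = 1 := by simp [sg]
      rw [hs1, if_neg hb, List.length_cons,
        if_pos (List.mem_cons_self), pow_succ]
      ring
    · have h1 : sg a b = -1 := by simp [sg, hba]
      have h2 : a ∈ b :: l ↔ a ∈ l := by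
        simp only [List.mem_cons]
        exact or_iff_right (fun h => hba h.symm)
      rw [h1, List.length_cons, if_congr h2 rfl rfl, pow_succ]
      ring

theorem prod_ite_mem (s : Finset (Fin n)) (l : List (Fin n)) :
    (l.map (fun a => (if a ∈ s then (-1:ℂ) else 1))).prod
      = (-1:ℂ)^(l.countP (fun a => decide (a ∈ s))) := by
  induction l with
  | nil => simp
  | cons b l ih =>
    rw [List.map_cons, List.prod_cons, ih, List.countP_cons]
    by_cases hb : b ∈ s <;> simp [hb, pow_succ] <;> ring

theorem prod_mul_const (c : ℂ) (g : Fin n → ℂ) (l : List (Fin n)) :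
    (l.map (fun a => c * g a)).prod = c ^ l.length * (l.map g).prod := by
  induction l with
  | nil => simp
  | cons b l ih =>
    rw [List.map_cons, List.prod_cons, ih, List.map_cons, List.prod_cons, List.length_cons]
    ring

theorem countP_nodup_inter (s : Finset (Fin n)) {l : List (Fin n)} (h : l.Nodup) :
    l.countP (fun a => decide (a ∈ s)) = (l.toFinset ∩ s).card := by
  induction l with
  | nil => simp
  | cons a l ih =>
    obtain ⟨ha, hl⟩ := List.nodup_cons.mp h
    rw [List.countP_cons, ih hl, List.toFinset_cons]
    by_cases has : a ∈ s
    · have h1 : insert a l.toFinset ∩ s = insert a (l.toFinset ∩ s) := by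
        ext x
        simp only [Finset.mem_inter, Finset.mem_insert]
        constructor
        · rintro ⟨rfl | hx, hxs⟩
          · exact Or.inl rfl
          · exact Or.inr ⟨hx, hxs⟩
        · rintro (rfl | ⟨h1, h2⟩)
          · exact ⟨Or.inl rfl, has⟩
          · exact ⟨Or.inr h1, h2⟩
      rw [h1, Finset.card_insert_of_notMem
        (fun hc => ha (List.mem_toFinset.mp (Finset.mem_inter.mp hc).1))]
      simp [has]
    · have h1 : insert a l.toFinset ∩ s = l.toFinset ∩ s := by
        ext x
        simp only [Finset.mem_inter, Finset.mem_insert]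
        constructor
        · rintro ⟨rfl | hx, hxs⟩
          · exact absurd hxs has
          · exact ⟨hx, hxs⟩
        · rintro ⟨h1, h2⟩
          exact ⟨Or.inr h1, h2⟩
      rw [h1]
      simp [has]

theorem countP_sort_inter (s t : Finset (Fin n)) :
    ((t.sort (· ≤ ·)).countP (fun a => decide (a ∈ s))) = (t ∩ s).card := by
  rw [countP_nodup_inter s (Finset.sort_nodup _ _), Finset.sort_toFinset]

include hE1 hanti

theorem eP_comm_exact (s t : Finset (Fin n)) :
    eP E t * eP E s = ((-1:ℂ)^(s.card * t.card + (s ∩ t).card)) • (eP E s * eP E t) := by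
  have h := comm_lists E hE1 hanti (t.sort (· ≤ ·)) (s.sort (· ≤ ·))
  have hinner : ∀ a ∈ t.sort (· ≤ ·),
      ((s.sort (· ≤ ·)).map (sg a)).prod = (-1:ℂ)^s.card * (if a ∈ s then -1 else 1) := by
    intro a _
    rw [prod_sg_list a (Finset.sort_nodup _ _), Finset.length_sort]
    congr 2
    simp [Finset.mem_sort]
  rw [List.map_congr_left hinner] at h
  rw [prod_mul_const, prod_ite_mem, Finset.length_sort, countP_sort_inter, ← pow_mul] at h
  calc eP E t * eP E s
      = eL E (t.sort (· ≤ ·)) * eL E (s.sort (· ≤ ·)) := rfl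
    _ = ((-1:ℂ)^(s.card * t.card) * (-1:ℂ)^((t ∩ s).card)) •
          (eL E (s.sort (· ≤ ·)) * eL E (t.sort (· ≤ ·))) := h
    _ = ((-1:ℂ)^(s.card * t.card + (s ∩ t).card)) • (eP E s * eP E t) := by
        rw [Finset.inter_comm t s, pow_add]
        rfl

theorem eP_commKey (s t : Finset (Fin n)) (hs : Even s.card) :
    eP E s * eP E t = ((-1:ℂ)^((s ∩ t).card)) • (eP E t * eP E s) := by
  have h := eP_comm_exact E hE1 hanti t s
  rw [mul_comm t.card s.card, Finset.inter_comm t s, pow_add,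
    Even.neg_one_pow (hs.mul_right t.card), one_mul] at h
  exact h

omit hE1 hanti

theorem char_sum {D : Finset (Fin n)} (hD : D.Nonempty) :
    ∑ C : Finset (Fin n), ((-1:ℂ))^((D ∩ C).card) = 0 := by
  obtain ⟨a, ha⟩ := hD
  have key : ∀ C : Finset (Fin n), a ∉ C →
      (D ∩ insert a C).card = (D ∩ C).card + 1 := by
    intro C hC
    have h1 : D ∩ insert a C = insert a (D ∩ C) := by
      ext x
      simp only [Finset.mem_inter, Finset.mem_insert]
      constructor
      · rintro ⟨hxD, rfl | hxC⟩
        · exact Or.inl rfl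
        · exact Or.inr ⟨hxD, hxC⟩
      · rintro (rfl | ⟨h1, h2⟩)
        · exact ⟨ha, Or.inl rfl⟩
        · exact ⟨h1, Or.inr h2⟩
    rw [h1, Finset.card_insert_of_notMem (fun hc => hC (Finset.mem_inter.mp hc).2)]
  refine Finset.sum_ninvolution (fun C => symmDiff {a} C) ?_ ?_ (fun _ => Finset.mem_univ _) ?_
  · intro C
    by_cases hC : a ∈ C
    · rw [symmDiff_singleton_of_mem hC]
      have h2 : (D ∩ C).card = (D ∩ C.erase a).card + 1 := by
        conv_lhs => rw [← Finset.insert_erase hC]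
        exact key _ (Finset.notMem_erase a C)
      rw [h2, pow_succ]
      ring
    · rw [symmDiff_singleton_of_not_mem hC, key _ hC, pow_succ]
      ring
  · intro C _
    by_cases hC : a ∈ C
    · rw [symmDiff_singleton_of_mem hC]
      intro hc
      have : a ∈ C.erase a := hc.symm ▸ hC
      exact Finset.notMem_erase a C this
    · rw [symmDiff_singleton_of_not_mem hC]
      intro hc
      have : a ∈ C := hc ▸ Finset.mem_insert_self a C
      exact hC this
  · intro C
    exact symmDiff_symmDiff_cancel_left _ _

end CliffAux

namespace CliffAux

variable {n : ℕ} {A : Type*} [Ring A] [Algebra ℂ A] (E : Fin n → A)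
variable (hE1 : ∀ i, E i * E i = 1)
variable (hanti : ∀ i j, i ≠ j → E i * E j = -(E j * E i))

theorem exists_index_list (l : List A) (h : ∀ y ∈ l, ∃ i, E i = y) :
    ∃ li : List (Fin n), li.map E = l := by
  induction l with
  | nil => exact ⟨[], rfl⟩
  | cons a l ih =>
    obtain ⟨li, hli⟩ := ih (fun y hy => h y (List.mem_cons_of_mem a hy))
    obtain ⟨i, hi⟩ := h a (List.mem_cons_self)
    exact ⟨i :: li, by rw [List.map_cons, hli, hi]⟩

include hE1 hanti

theorem exists_repr (hadj : Algebra.adjoin ℂ (Set.range E) = ⊤) (x : A) :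
    ∃ d : Finset (Fin n) → ℂ, x = ∑ s : Finset (Fin n), d s • eP E s := by
  have hx : x ∈ Submodule.span ℂ ((Submonoid.closure (Set.range E) : Submonoid A) : Set A) := by
    have h1 : x ∈ Subalgebra.toSubmodule (Algebra.adjoin ℂ (Set.range E)) := by
      rw [hadj]; trivial
    rwa [Algebra.adjoin_eq_span] at h1
  refine Submodule.span_induction ?_ ?_ ?_ ?_ hx
  · intro y hy
    obtain ⟨l, hl, rfl⟩ := Submonoid.exists_list_of_mem_closure hy
    obtain ⟨li, rfl⟩ := exists_index_list E l hl
    obtain ⟨σ, _, he⟩ := list_reduce E hE1 hanti li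
    refine ⟨fun s => if s = lsupp li then σ else 0, ?_⟩
    show eL E li = _
    rw [he, Finset.sum_eq_single (lsupp li)
      (fun b _ hb => by dsimp only; rw [if_neg hb, zero_smul])
      (fun hb => absurd (Finset.mem_univ _) hb)]
    dsimp only
    rw [if_pos rfl]
  · exact ⟨0, by simp⟩
  · rintro y z _ _ ⟨dy, hdy⟩ ⟨dz, hdz⟩
    exact ⟨dy + dz, by rw [hdy, hdz, ← Finset.sum_add_distrib]; simp [add_smul]⟩
  · rintro c y _ ⟨d, hd⟩
    exact ⟨fun s => c * d s, by rw [hd, Finset.smul_sum]; simp [smul_smul]⟩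

omit hE1 hanti in
theorem even_card_symmDiff {s B : Finset (Fin n)} (hs : Even s.card) (hB : Even B.card) :
    Even (symmDiff s B).card := by
  have hd : symmDiff s B = (s \ B) ∪ (B \ s) := by
    ext x
    simp [Finset.mem_symmDiff, Finset.mem_union, Finset.mem_sdiff]
  have hdisj : Disjoint (s \ B) (B \ s) := disjoint_sdiff_sdiff
  have hcard : (symmDiff s B).card = (s \ B).card + (B \ s).card := by
    rw [hd, Finset.card_union_of_disjoint hdisj]
  have h1 : (s \ B).card + (s ∩ B).card = s.card := Finset.card_sdiff_add_card_inter s B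
  have h2 : (B \ s).card + (B ∩ s).card = B.card := Finset.card_sdiff_add_card_inter B s
  have h3 : (B ∩ s).card = (s ∩ B).card := by rw [Finset.inter_comm]
  rw [Nat.even_iff] at hs hB ⊢
  omega

theorem coeff_eq_zero {M : Type*} [Ring M] [Algebra ℂ M] [NoZeroSMulDivisors ℂ M] [Nontrivial M]
    (γm : A →ₐ[ℂ] M) (d : Finset (Fin n) → ℂ)
    (hodd : ∀ s : Finset (Fin n), ¬ Even s.card → d s = 0)
    (hγ : γm (∑ s : Finset (Fin n), d s • eP E s) = 0) : ∀ B : Finset (Fin n), d B = 0 := by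
  intro B
  by_cases hB : Even B.card
  swap
  · exact hodd B hB
  choose τ hτ1 hτ2 using eP_mul_eP E hE1 hanti
  have hττ : ∀ s t, τ s t * τ s t = 1 := by
    intro s t
    rcases hτ1 s t with h | h <;> rw [h] <;> ring
  have hτne : ∀ s t, τ s t ≠ 0 := by
    intro s t
    rcases hτ1 s t with h | h <;> rw [h] <;> norm_num
  set x : A := ∑ s : Finset (Fin n), d s • eP E s with hxdef
  set K : ℂ := (Fintype.card (Finset (Fin n)) : ℂ) with hK
  set W : A := ∑ C : Finset (Fin n), τ C C • (eP E C * (x * eP E B) * eP E C) with hW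
  have claim1 : γm W = 0 := by
    rw [hW, map_sum]
    refine Finset.sum_eq_zero fun C _ => ?_
    rw [map_smul, map_mul, map_mul, map_mul, hγ]
    simp
  have hxB : x * eP E B = ∑ s : Finset (Fin n), (d s * τ s B) • eP E (symmDiff s B) := by
    rw [hxdef, Finset.sum_mul]
    refine Finset.sum_congr rfl fun s _ => ?_
    rw [smul_mul_assoc, hτ2, smul_smul]
  -- the key conjugation computation for a single even D and single C
  have hconj : ∀ (D C : Finset (Fin n)), Even D.card →
      τ C C • (eP E C * eP E D * eP E C) = ((-1:ℂ))^((D ∩ C).card) • eP E D := by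
    intro D C hD
    have hcc : eP E C * eP E C = τ C C • (1 : A) := by
      rw [hτ2, symmDiff_self, Finset.bot_eq_empty, eP_empty]
    calc τ C C • (eP E C * eP E D * eP E C)
        = τ C C • (eP E C * (eP E D * eP E C)) := by rw [mul_assoc]
      _ = τ C C • (eP E C * (((-1:ℂ))^((D ∩ C).card) • (eP E C * eP E D))) := by
          rw [eP_commKey E hE1 hanti D C hD]
      _ = (τ C C * ((-1:ℂ))^((D ∩ C).card)) • ((eP E C * eP E C) * eP E D) := by
          rw [mul_smul_comm, smul_smul, mul_assoc]
      _ = (τ C C * ((-1:ℂ))^((D ∩ C).card) * τ C C) • eP E D := by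
          rw [hcc, smul_mul_assoc, one_mul, smul_smul]
      _ = ((-1:ℂ))^((D ∩ C).card) • eP E D := by
          rw [mul_comm (τ C C), mul_assoc, hττ, mul_one]
  have hinner : ∀ s : Finset (Fin n), Even s.card →
      (∑ C : Finset (Fin n), τ C C • (eP E C * eP E (symmDiff s B) * eP E C))
        = (∑ C : Finset (Fin n), ((-1:ℂ))^(((symmDiff s B) ∩ C).card)) • eP E (symmDiff s B) := by
    intro s hs
    rw [Finset.sum_smul]
    exact Finset.sum_congr rfl fun C _ => hconj (symmDiff s B) C (even_card_symmDiff hs hB)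
  have claim2 : W = (K * (τ B B * d B)) • (1 : A) := by
    rw [hW]
    calc (∑ C : Finset (Fin n), τ C C • (eP E C * (x * eP E B) * eP E C))
        = ∑ C : Finset (Fin n), ∑ s : Finset (Fin n), (d s * τ s B) •
            (τ C C • (eP E C * eP E (symmDiff s B) * eP E C)) := by
          refine Finset.sum_congr rfl fun C _ => ?_
          rw [hxB, Finset.mul_sum, Finset.sum_mul, Finset.smul_sum]
          refine Finset.sum_congr rfl fun s _ => ?_
          rw [mul_smul_comm, smul_mul_assoc, smul_smul, smul_smul]
          congr 1
          ring
      _ = ∑ s : Finset (Fin n), (d s * τ s B) •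
            (∑ C : Finset (Fin n), τ C C • (eP E C * eP E (symmDiff s B) * eP E C)) := by
          rw [Finset.sum_comm]
          exact Finset.sum_congr rfl fun s _ => by rw [Finset.smul_sum]
      _ = (K * (τ B B * d B)) • (1 : A) := ?_
    rw [Finset.sum_eq_single B]
    · -- the B term
      rw [hinner B hB, symmDiff_self, Finset.bot_eq_empty, eP_empty]
      have hz : ∀ C : Finset (Fin n), ((-1:ℂ))^(((∅ : Finset (Fin n)) ∩ C).card) = 1 := by
        intro C
        rw [Finset.empty_inter, Finset.card_empty, pow_zero]
      rw [Finset.sum_congr rfl (fun C _ => hz C), Finset.sum_const, Finset.card_univ,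
        nsmul_eq_mul, mul_one, smul_smul]
      congr 1
      ring
    · intro s _ hsB
      by_cases hs : Even s.card
      · rw [hinner s hs]
        have hne : (symmDiff s B).Nonempty := by
          rw [Finset.nonempty_iff_ne_empty]
          intro hc
          exact hsB (symmDiff_eq_bot.mp (by rwa [Finset.bot_eq_empty]))
        rw [char_sum hne, zero_smul, smul_zero]
      · rw [hodd s hs, zero_mul, zero_smul]
    · intro hc
      exact absurd (Finset.mem_univ B) hc
  have hfinal : (K * (τ B B * d B)) • (1 : M) = 0 := by
    have := claim1
    rw [claim2, map_smul, map_one] at this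
    exact this
  rcases smul_eq_zero.mp hfinal with h | h
  · have hKne : K ≠ 0 := by
      rw [hK]
      exact Nat.cast_ne_zero.mpr Fintype.card_ne_zero
    rcases mul_eq_zero.mp h with h' | h'
    · exact absurd h' hKne
    · rcases mul_eq_zero.mp h' with h'' | h''
      · exact absurd h'' (hτne B B)
      · exact h''
  · exact absurd h one_ne_zero

end CliffAux


namespace CliffAux
theorem odd_card_symmDiff {n : ℕ} {s B : Finset (Fin n)} (hs : ¬ Even s.card) (hB : ¬ Even B.card) :
    Even (symmDiff s B).card := by
  have hd : symmDiff s B = (s \ B) ∪ (B \ s) := by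
    ext x
    simp [Finset.mem_symmDiff, Finset.mem_union, Finset.mem_sdiff]
  have hdisj : Disjoint (s \ B) (B \ s) := disjoint_sdiff_sdiff
  have hcard : (symmDiff s B).card = (s \ B).card + (B \ s).card := by
    rw [hd, Finset.card_union_of_disjoint hdisj]
  have h1 : (s \ B).card + (s ∩ B).card = s.card := Finset.card_sdiff_add_card_inter s B
  have h2 : (B \ s).card + (B ∩ s).card = B.card := Finset.card_sdiff_add_card_inter B s
  have h3 : (B ∩ s).card = (s ∩ B).card := by rw [Finset.inter_comm]
  rw [Nat.even_iff]
  rw [Nat.not_even_iff] at hs hB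
  omega
end CliffAux

set_option maxHeartbeats 2000000 in
open CliffAux in
open CpxClifford in
/-- If `(V,h)` has odd dimension and `γ` is an irreducible complex Clifford
representation, then the ℂ-linear extension `γ_ℂ : ℂl(V,h) → End_ℂ(S)` restricts to an
isomorphism of unital associative ℂ-algebras from the even subalgebra `ℂl⁺(V,h)` onto
`End_ℂ(S)`: its restriction to the even part is injective and surjective. -/
theorem complexified_rep_restricts_iso_even_part
    {V : Type*} [AddCommGroup V] [Module ℝ V] [FiniteDimensional ℝ V]
    {S : Type*} [AddCommGroup S] [Module ℝ S] [Module ℂ S] [IsScalarTower ℝ ℂ S]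
    [FiniteDimensional ℂ S] [Nontrivial S]
    (h : LinearMap.BilinForm ℝ V) (hsymm : h.IsSymm) (hnd : h.Nondegenerate)
    (hodd : Module.finrank ℝ V % 2 = 1)
    (γ : CliffordAlgebra h.toQuadraticMap →ₐ[ℝ] Module.End ℂ S)
    (hirr : IsIrred h.toQuadraticMap γ) :
    Set.InjOn (γC h.toQuadraticMap γ) (evenSet h.toQuadraticMap) ∧
    (γC h.toQuadraticMap γ) '' (evenSet h.toQuadraticMap) = Set.univ := by
  classical
  set n := Module.finrank ℝ V with hndef
  have hoddn : Odd n := Nat.odd_iff.mpr hodd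
  obtain ⟨v, hv⟩ := LinearMap.BilinForm.exists_orthogonal_basis (LinearMap.BilinForm.isSymm_iff.mp hsymm)
  -- diagonal entries are nonzero
  have hvne : ∀ i, h (v i) (v i) ≠ 0 := by
    intro i hzero
    refine v.ne_zero i (hnd.1 (v i) ?_)
    intro w
    conv_lhs => rw [← Module.Basis.sum_repr v w]
    rw [map_sum]
    refine Finset.sum_eq_zero fun j _ => ?_
    rw [map_smul]
    by_cases hij : j = i
    · subst hij; rw [hzero, smul_zero]
    · rw [hv (fun hc => hij (hc.symm)), smul_zero]
  -- square roots
  have hμex : ∀ i, ∃ z : ℂ, z ^ 2 = (((h (v i) (v i) : ℝ) : ℂ))⁻¹ := fun i =>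
    IsAlgClosed.exists_pow_nat_eq _ (by norm_num)
  choose μ hμ using hμex
  have hrne : ∀ i, ((h (v i) (v i) : ℝ) : ℂ) ≠ 0 := fun i => Complex.ofReal_ne_zero.mpr (hvne i)
  have hμne : ∀ i, μ i ≠ 0 := by
    intro i hc
    have h1 := hμ i
    rw [hc, zero_pow (by norm_num : (2:ℕ) ≠ 0)] at h1
    exact hrne i (inv_eq_zero.mp h1.symm)
  have hsmul_def : ∀ (z : ℂ) (x : CCl h.toQuadraticMap), z • x = algebraMap ℂ (CCl h.toQuadraticMap) z * x :=
    fun z x => Algebra.smul_def z x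
  set E : Fin n → CCl h.toQuadraticMap := fun i => μ i • (ιC h.toQuadraticMap (v i)) with hEdef
  have hιC : ∀ w : V, ιC h.toQuadraticMap w =
      (Algebra.TensorProduct.includeRight : CliffordAlgebra h.toQuadraticMap →ₐ[ℝ] CCl h.toQuadraticMap)
        (CliffordAlgebra.ι h.toQuadraticMap w) := fun w => rfl
  have halgRC : ∀ r : ℝ, algebraMap ℝ (CCl h.toQuadraticMap) r = algebraMap ℂ (CCl h.toQuadraticMap) ((r : ℂ)) := by
    intro r
    rw [IsScalarTower.algebraMap_apply ℝ ℂ (CCl h.toQuadraticMap)]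
    rfl
  have hsmulRC : ∀ (r : ℝ) (x : CCl h.toQuadraticMap), r • x = ((r : ℂ)) • x := by
    intro r x
    rw [show ((r : ℂ)) = algebraMap ℝ ℂ r from rfl, algebraMap_smul]
  have hιmul : ∀ w : V, ιC h.toQuadraticMap w * ιC h.toQuadraticMap w = algebraMap ℂ (CCl h.toQuadraticMap) ((h.toQuadraticMap w : ℝ) : ℂ) := by
    intro w
    rw [hιC, ← map_mul, CliffordAlgebra.ι_sq_scalar, AlgHom.commutes, halgRC]
  have hQv : ∀ i, h.toQuadraticMap (v i) = h (v i) (v i) := fun i => LinearMap.BilinMap.toQuadraticMap_apply h (v i)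
  have hE1 : ∀ i, E i * E i = 1 := by
    intro i
    show (μ i • ιC h.toQuadraticMap (v i)) * (μ i • ιC h.toQuadraticMap (v i)) = 1
    rw [smul_mul_assoc, mul_smul_comm, smul_smul, hιmul, hQv, hsmul_def, ← map_mul,
      ← pow_two, hμ, inv_mul_cancel₀ (hrne i), map_one]
  have hanti : ∀ i j, i ≠ j → E i * E j = -(E j * E i) := by
    intro i j hij
    have h0 : CliffordAlgebra.ι h.toQuadraticMap (v i) * CliffordAlgebra.ι h.toQuadraticMap (v j)
        = -(CliffordAlgebra.ι h.toQuadraticMap (v j) * CliffordAlgebra.ι h.toQuadraticMap (v i)) := by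
      refine eq_neg_of_add_eq_zero_left ?_
      have := CliffordAlgebra.ι_mul_ι_add_swap (Q := h.toQuadraticMap) (v i) (v j)
      rw [this, LinearMap.BilinMap.polar_toQuadraticMap, hv hij,
        hv (fun hc => hij hc.symm), add_zero, map_zero]
    have h0' : (Algebra.TensorProduct.includeRight ((CliffordAlgebra.ι h.toQuadraticMap) (v i)) : CCl h.toQuadraticMap) *
        Algebra.TensorProduct.includeRight ((CliffordAlgebra.ι h.toQuadraticMap) (v j))
        = -((Algebra.TensorProduct.includeRight ((CliffordAlgebra.ι h.toQuadraticMap) (v j)) : CCl h.toQuadraticMap) *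
            Algebra.TensorProduct.includeRight ((CliffordAlgebra.ι h.toQuadraticMap) (v i))) := by
      have h2 := congrArg (Algebra.TensorProduct.includeRight :
        CliffordAlgebra h.toQuadraticMap →ₐ[ℝ] CCl h.toQuadraticMap) h0
      rwa [map_mul, map_neg, map_mul] at h2
    show (μ i • ιC h.toQuadraticMap (v i)) * (μ j • ιC h.toQuadraticMap (v j)) = -((μ j • ιC h.toQuadraticMap (v j)) * (μ i • ιC h.toQuadraticMap (v i)))
    rw [smul_mul_assoc, mul_smul_comm, smul_smul, smul_mul_assoc, mul_smul_comm, smul_smul,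
      hιC, hιC, h0', smul_neg, mul_comm (μ j) (μ i)]
  -- adjoin
  have hmemE : ∀ w : V, ιC h.toQuadraticMap w ∈ Algebra.adjoin ℂ (Set.range E) := by
    intro w
    have hιvj : ∀ j, ιC h.toQuadraticMap (v j) ∈ Algebra.adjoin ℂ (Set.range E) := by
      intro j
      have : ιC h.toQuadraticMap (v j) = (μ j)⁻¹ • E j := by
        rw [hEdef]
        dsimp only
        rw [smul_smul, inv_mul_cancel₀ (hμne j), one_smul]
      rw [this]
      exact Subalgebra.smul_mem _ (Algebra.subset_adjoin (Set.mem_range_self j)) _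
    have hw : ιC h.toQuadraticMap w = ∑ j, (v.repr w) j • ιC h.toQuadraticMap (v j) := by
      conv_lhs => rw [← Module.Basis.sum_repr v w]
      rw [map_sum]
      exact Finset.sum_congr rfl fun j _ => by rw [map_smul]
    rw [hw]
    refine Subalgebra.sum_mem _ fun j _ => ?_
    rw [hsmulRC]
    exact Subalgebra.smul_mem _ (hιvj j) _
  have hadj : Algebra.adjoin ℂ (Set.range E) = ⊤ := by
    rw [eq_top_iff]
    rintro x -
    induction x using TensorProduct.induction_on with
    | zero => exact Subalgebra.zero_mem _
    | tmul z c =>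
      have h1 : (z ⊗ₜ[ℝ] c : CCl h.toQuadraticMap) = z • ((1 : ℂ) ⊗ₜ[ℝ] c) := by
        rw [TensorProduct.smul_tmul', smul_eq_mul, mul_one]
      rw [h1]
      refine Subalgebra.smul_mem _ ?_ z
      show (Algebra.TensorProduct.includeRight : CliffordAlgebra h.toQuadraticMap →ₐ[ℝ] CCl h.toQuadraticMap) c ∈ _
      clear h1
      induction c using CliffordAlgebra.induction with
      | algebraMap r =>
        rw [AlgHom.commutes, halgRC]
        exact Subalgebra.algebraMap_mem _ _
      | ι w => exact hmemE w
      | mul a b ha hb => rw [map_mul]; exact mul_mem ha hb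
      | add a b ha hb => rw [map_add]; exact add_mem ha hb
    | add a b ha hb => exact add_mem ha hb
  -- parity involution facts
  have hπalg : ∀ z : ℂ, πC h.toQuadraticMap (algebraMap ℂ (CCl h.toQuadraticMap) z) = algebraMap ℂ (CCl h.toQuadraticMap) z := by
    intro z
    rw [Algebra.TensorProduct.algebraMap_apply]
    show (Algebra.TensorProduct.map (AlgHom.id ℝ ℂ) CliffordAlgebra.involute) _ = _
    rw [Algebra.TensorProduct.map_tmul, map_one]
    rfl
  have hπsmul : ∀ (z : ℂ) (x : CCl h.toQuadraticMap), πC h.toQuadraticMap (z • x) = z • πC h.toQuadraticMap x := by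
    intro z x
    rw [hsmul_def, map_mul, hπalg, ← hsmul_def]
  have hπE : ∀ i, πC h.toQuadraticMap (E i) = -(E i) := by
    intro i
    show πC h.toQuadraticMap (μ i • ιC h.toQuadraticMap (v i)) = -(μ i • ιC h.toQuadraticMap (v i))
    rw [hπsmul]
    have h2 : πC h.toQuadraticMap (ιC h.toQuadraticMap (v i)) = -(ιC h.toQuadraticMap (v i)) := by
      show (Algebra.TensorProduct.map (AlgHom.id ℝ ℂ) CliffordAlgebra.involute)
          ((1 : ℂ) ⊗ₜ[ℝ] CliffordAlgebra.ι h.toQuadraticMap (v i)) = _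
      rw [Algebra.TensorProduct.map_tmul, CliffordAlgebra.involute_ι, TensorProduct.tmul_neg]
      rfl
    rw [h2, smul_neg]
  have hπeL : ∀ l : List (Fin n), πC h.toQuadraticMap (eL E l) = ((-1 : ℂ)) ^ l.length • eL E l := by
    intro l
    induction l with
    | nil => simp [eL]
    | cons a l ih =>
      calc πC h.toQuadraticMap (eL E (a :: l)) = πC h.toQuadraticMap (E a * eL E l) := by
            rw [eL_cons]
        _ = (πC h.toQuadraticMap (E a)) * (πC h.toQuadraticMap (eL E l)) := map_mul _ _ _
        _ = (-E a) * (((-1:ℂ))^l.length • eL E l) := by rw [hπE, ih]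
        _ = ((-1:ℂ))^(l.length+1) • (E a * eL E l) := by
            rw [neg_mul (E a) (((-1:ℂ))^l.length • eL E l), mul_smul_comm, pow_succ,
              mul_comm (((-1:ℂ))^l.length) (-1), ← smul_smul, neg_one_smul]
        _ = ((-1:ℂ))^((a :: l).length) • eL E (a :: l) := by rw [List.length_cons, eL_cons]
  have hπeP : ∀ s : Finset (Fin n), πC h.toQuadraticMap (eP E s) = ((-1 : ℂ)) ^ s.card • eP E s := by
    intro s
    show πC h.toQuadraticMap (eL E (s.sort (· ≤ ·))) = _
    rw [hπeL, Finset.length_sort]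
    rfl
  -- volume element
  set ω : CCl h.toQuadraticMap := eP E Finset.univ with hωdef
  have hcard_univ : (Finset.univ : Finset (Fin n)).card = n := by
    rw [Finset.card_univ, Fintype.card_fin]
  have hωcommE : ∀ i, ω * E i = E i * ω := by
    intro i
    have h1 := comm_single E hE1 hanti i (Finset.univ.sort (· ≤ ·))
    rw [prod_sg_list i (Finset.sort_nodup _ _), Finset.length_sort, hcard_univ] at h1
    rw [if_pos (by rw [Finset.mem_sort]; exact Finset.mem_univ i)] at h1
    rw [Odd.neg_one_pow hoddn] at h1
    have h2 : ((-1 : ℂ)) * (-1) = 1 := by norm_num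
    rw [h2, one_smul] at h1
    exact h1.symm
  have hωcomm : ∀ x : CCl h.toQuadraticMap, ω * x = x * ω := by
    intro x
    have hx : x ∈ Algebra.adjoin ℂ (Set.range E) := by rw [hadj]; trivial
    induction hx using Algebra.adjoin_induction with
    | mem y hy =>
      obtain ⟨i, rfl⟩ := hy
      exact hωcommE i
    | algebraMap z => rw [← Algebra.commutes z ω]
    | add a b _ _ ha hb => rw [mul_add, add_mul, ha, hb]
    | mul a b _ _ ha hb => rw [← mul_assoc, ha, mul_assoc, hb, mul_assoc]
  obtain ⟨σω, hσω, hωω⟩ : ∃ σω : ℂ, (σω = 1 ∨ σω = -1) ∧ ω * ω = σω • 1 := by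
    obtain ⟨σ, hσ, he⟩ := eP_mul_eP E hE1 hanti Finset.univ Finset.univ
    rw [symmDiff_self, Finset.bot_eq_empty, eP_empty] at he
    exact ⟨σ, hσ, he⟩
  -- the representation
  set Γ := γC h.toQuadraticMap γ with hΓdef
  have hΓtmul : ∀ (z : ℂ) (c : CliffordAlgebra h.toQuadraticMap), Γ ((z ⊗ₜ[ℝ] c : CCl h.toQuadraticMap)) = z • γ c := by
    intro z c
    show (Algebra.TensorProduct.lift _ _ _) (z ⊗ₜ c) = _
    rw [Algebra.TensorProduct.lift_tmul, Algebra.ofId_apply, ← Algebra.smul_def]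
  have hΓinc : ∀ c : CliffordAlgebra h.toQuadraticMap,
      Γ ((Algebra.TensorProduct.includeRight : CliffordAlgebra h.toQuadraticMap →ₐ[ℝ] CCl h.toQuadraticMap) c) = γ c := by
    intro c
    have : (Algebra.TensorProduct.includeRight : CliffordAlgebra h.toQuadraticMap →ₐ[ℝ] CCl h.toQuadraticMap) c
        = ((1 : ℂ) ⊗ₜ[ℝ] c : CCl h.toQuadraticMap) := rfl
    rw [this, hΓtmul, one_smul]
  have hone : (1 : Module.End ℂ S) ≠ 0 := by
    intro hc
    obtain ⟨s, hs⟩ := exists_ne (0 : S)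
    apply hs
    have := congrArg (fun f : Module.End ℂ S => f s) hc
    simpa using this
  haveI : Nontrivial (Module.End ℂ S) := nontrivial_of_ne 1 0 hone
  -- γ(ω) is a nonzero scalar
  obtain ⟨cω, hcω, hcωne⟩ : ∃ c : ℂ, Γ ω = c • (1 : Module.End ℂ S) ∧ c ≠ 0 := by
    obtain ⟨c, hc⟩ := Module.End.exists_eigenvalue (Γ ω)
    obtain ⟨u, hu⟩ := hc.exists_hasEigenvector
    let W : Submodule ℂ S :=
      { carrier := {s | Γ ω s = c • s}
        add_mem' := fun {a b} ha hb => by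
          simp only [Set.mem_setOf_eq] at *
          rw [map_add, ha, hb, smul_add]
        zero_mem' := by simp
        smul_mem' := fun z s hs => by
          simp only [Set.mem_setOf_eq] at *
          rw [map_smul, hs, smul_comm] }
    have hWinv : ∀ (x : CliffordAlgebra h.toQuadraticMap), ∀ w ∈ W, γ x w ∈ W := by
      intro x w hw
      show Γ ω (γ x w) = c • γ x w
      have hcomm : Γ ω * γ x = γ x * Γ ω := by
        rw [← hΓinc x, ← map_mul, ← map_mul, hωcomm]
      calc Γ ω (γ x w) = (Γ ω * γ x) w := rfl
        _ = (γ x * Γ ω) w := by rw [hcomm]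
        _ = γ x (Γ ω w) := rfl
        _ = γ x (c • w) := by rw [show Γ ω w = c • w from hw]
        _ = c • γ x w := map_smul _ _ _
    rcases hirr W hWinv with hbot | htop
    · exfalso
      have huW : u ∈ W := hu.apply_eq_smul
      rw [hbot] at huW
      exact hu.2 (by simpa using huW)
    · have hall : ∀ s, Γ ω s = c • s := fun s => by
        have : s ∈ W := htop ▸ Submodule.mem_top
        exact this
      have hΓω : Γ ω = c • (1 : Module.End ℂ S) := by
        ext s
        rw [hall]
        simp
      refine ⟨c, hΓω, ?_⟩
      have h2 : (c * c) • (1 : Module.End ℂ S) = σω • 1 := by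
        calc (c * c) • (1 : Module.End ℂ S) = (c • 1) * (c • (1 : Module.End ℂ S)) := by
              rw [smul_mul_assoc, mul_smul_comm, smul_smul, mul_one]
          _ = Γ ω * Γ ω := by rw [hΓω]
          _ = Γ (ω * ω) := (map_mul _ _ _).symm
          _ = σω • Γ 1 := by rw [hωω, map_smul]
          _ = σω • 1 := by rw [map_one]
      have hcc : c * c = σω := by
        have h3 : (c * c - σω) • (1 : Module.End ℂ S) = 0 := by
          rw [sub_smul, h2, sub_self]
        rcases smul_eq_zero.mp h3 with h4 | h4
        · exact sub_eq_zero.mp h4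
        · exact absurd h4 hone
      intro hc0
      rw [hc0, mul_zero] at hcc
      rcases hσω with h5 | h5 <;> rw [← hcc] at h5 <;> norm_num at h5
  -- surjectivity of Γ via Burnside
  have hΓinv : ∀ (W : Submodule ℂ S), (∀ (x : CliffordAlgebra h.toQuadraticMap), ∀ w ∈ W, γ x w ∈ W) →
      ∀ (y : CCl h.toQuadraticMap), ∀ w ∈ W, Γ y w ∈ W := by
    intro W hWx y
    induction y using TensorProduct.induction_on with
    | zero => intro w hw; rw [map_zero]; simpa using W.zero_mem
    | tmul z c =>
      intro w hw
      rw [hΓtmul]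
      have : (z • γ c) w = z • (γ c w) := rfl
      rw [this]
      exact W.smul_mem z (hWx c w hw)
    | add a b ha hb =>
      intro w hw
      rw [map_add]
      have : (Γ a + Γ b) w = Γ a w + Γ b w := rfl
      rw [this]
      exact W.add_mem (ha w hw) (hb w hw)
  have hΓsurj : ∀ T : Module.End ℂ S, ∃ y : CCl h.toQuadraticMap, Γ y = T := by
    intro T
    have hb := my_burnside Γ.range (fun W hW => hirr W (fun x w hw => by
      refine hW (γ x) ?_ w hw
      exact ⟨(Algebra.TensorProduct.includeRight : CliffordAlgebra h.toQuadraticMap →ₐ[ℝ] CCl h.toQuadraticMap) x, hΓinc x⟩)) T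
    obtain ⟨b, hbT⟩ := hb
    obtain ⟨y, hy⟩ := (AlgHom.mem_range _).mp b.2
    exact ⟨y, by rw [hy, hbT]⟩
  -- injectivity on the even part
  have hinj0 : ∀ x : CCl h.toQuadraticMap, πC h.toQuadraticMap x = x → Γ x = 0 → x = 0 := by
    intro x hev hx0
    obtain ⟨d, hd⟩ := exists_repr E hE1 hanti hadj x
    set d' : Finset (Fin n) → ℂ :=
      fun s => (2⁻¹ : ℂ) * (1 + (-1) ^ s.card) * d s with hd'
    have hπx : πC h.toQuadraticMap x = ∑ s : Finset (Fin n), ((-1 : ℂ) ^ s.card * d s) • eP E s := by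
      conv_lhs => rw [hd]
      rw [map_sum]
      refine Finset.sum_congr rfl fun s _ => ?_
      rw [hπsmul, hπeP, smul_smul, mul_comm (d s)]
    have hx' : x = ∑ s : Finset (Fin n), d' s • eP E s := by
      have h2 : x = (2⁻¹ : ℂ) • (x + πC h.toQuadraticMap x) := by
        rw [hev, ← two_smul ℂ x, smul_smul]
        norm_num
      rw [h2]
      conv_lhs => rw [hπx, hd]
      rw [← Finset.sum_add_distrib, Finset.smul_sum]
      refine Finset.sum_congr rfl fun s _ => ?_
      rw [← add_smul, smul_smul, hd']
      congr 1
      ring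
    have hodd' : ∀ s : Finset (Fin n), ¬ Even s.card → d' s = 0 := by
      intro s hs
      have hno : ((-1 : ℂ)) ^ s.card = -1 := Odd.neg_one_pow (Nat.not_even_iff_odd.mp hs)
      rw [hd']
      dsimp only
      rw [hno]
      ring
    have hz := coeff_eq_zero E hE1 hanti Γ d' hodd' (by rw [← hx']; exact hx0)
    rw [hx']
    exact Finset.sum_eq_zero fun s _ => by rw [hz s, zero_smul]
  constructor
  · -- injectivity
    intro x1 h1 x2 h2 heq
    have hsub : πC h.toQuadraticMap (x1 - x2) = x1 - x2 := by
      rw [map_sub]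
      rw [show πC h.toQuadraticMap x1 = x1 from h1, show πC h.toQuadraticMap x2 = x2 from h2]
    have h0 : Γ (x1 - x2) = 0 := by rw [map_sub, heq, sub_self]
    exact sub_eq_zero.mp (hinj0 _ hsub h0)
  · -- surjectivity
    ext T
    simp only [Set.mem_image, Set.mem_univ, iff_true]
    obtain ⟨y, hy⟩ := hΓsurj T
    obtain ⟨d, hd⟩ := exists_repr E hE1 hanti hadj y
    choose τ hτ1 hτ2 using eP_mul_eP E hE1 hanti
    have hrel : ∀ s : Finset (Fin n),
        Γ (eP E s) = (cω⁻¹ * τ Finset.univ s) • Γ (eP E (symmDiff Finset.univ s)) := by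
      intro s
      have h1 : ω * eP E s = τ Finset.univ s • eP E (symmDiff Finset.univ s) := hτ2 _ _
      have h2 := congrArg Γ h1
      rw [map_mul, map_smul, hcω, smul_mul_assoc, one_mul] at h2
      have h3 : Γ (eP E s) = cω⁻¹ • (τ Finset.univ s • Γ (eP E (symmDiff Finset.univ s))) :=
        (eq_inv_smul_iff₀ hcωne).mpr h2
      rw [h3, smul_smul]
    set y' : CCl h.toQuadraticMap := ∑ s : Finset (Fin n),
      (if Even s.card then d s • eP E s
        else (d s * (cω⁻¹ * τ Finset.univ s)) • eP E (symmDiff Finset.univ s)) with hy'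
    refine ⟨y', ?_, ?_⟩
    · -- y' is even
      show πC h.toQuadraticMap y' = y'
      rw [hy', map_sum]
      refine Finset.sum_congr rfl fun s _ => ?_
      split_ifs with hs
      · rw [hπsmul, hπeP, Even.neg_one_pow hs, one_smul]
      · rw [hπsmul, hπeP]
        have hD : Even (symmDiff Finset.univ s).card := by
          refine odd_card_symmDiff ?_ hs
          rw [hcard_univ]
          exact (Nat.not_even_iff_odd.mpr hoddn)
        rw [Even.neg_one_pow hD, one_smul]
    · -- Γ y' = T
      rw [hy', map_sum, ← hy]
      conv_rhs => rw [hd]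
      rw [map_sum]
      refine Finset.sum_congr rfl fun s _ => ?_
      split_ifs with hs
      · rfl
      · rw [map_smul, map_smul, hrel s, smul_smul]
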